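/- For any separable near-metric value space (𝒴,ℓ) with 0 < ℓ̄ < ∞, every process admitting strong universal online learning for (𝒴,ℓ) also admits strong universal online learning for binary classification: SUOL_{(𝒳,ρ,𝒴,ℓ)} ⊆ SUOL_{(𝒳,ρ,{0,1},ℓ01)}. -/

import Mathlib

open MeasureTheory Filter Topology

/-- A near-metric loss structure on `Y`: symmetric, point-discerning, with a
relaxed triangle inequality with constant `c`. -/
structure NearMetric (Y : Type) where
  loss : Y → Y → ℝ
  nonneg : ∀ y₁ y₂, 0 ≤ loss y₁ y₂
  symm : ∀ y₁ y₂, loss y₁ y₂ = loss y₂ y₁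
  eq_zero_iff : ∀ y₁ y₂, loss y₁ y₂ = 0 ↔ y₁ = y₂
  c : ℝ
  c_nonneg : 0 ≤ c
  triangle : ∀ y₁ y₂ y₃, loss y₁ y₃ ≤ c * (loss y₂ y₁ + loss y₂ y₃)

namespace NearMetric

/-- `(Y, ℓ)` is separable: there is a countable `ℓ`-dense sequence. -/
def Separable {Y : Type} (L : NearMetric Y) : Prop :=
  ∃ s : ℕ → Y, ∀ y : Y, ∀ ε : ℝ, 0 < ε → ∃ i : ℕ, L.loss (s i) y < ε

/-- `0 < ℓ̄ < ∞`: the supremum of the loss is positive and finite. -/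
def BoundedPos {Y : Type} (L : NearMetric Y) : Prop :=
  (∃ y₁ y₂, 0 < L.loss y₁ y₂) ∧ (∃ M : ℝ, ∀ y₁ y₂, L.loss y₁ y₂ ≤ M)

/-- The σ-algebra on `Y` generated by `ℓ`-balls. -/
def mSpace {Y : Type} (L : NearMetric Y) : MeasurableSpace Y :=
  MeasurableSpace.generateFrom {B | ∃ (y : Y) (ε : ℝ), B = {y' | L.loss y y' < ε}}

/-- Measurability of a map into `Y` with respect to the ball σ-algebra of `L`. -/
def MeasurableFun {X Y : Type} [MeasurableSpace X] (L : NearMetric Y) (f : X → Y) : Prop :=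
  @Measurable X Y _ L.mSpace f

end NearMetric

/-- The 0–1 loss on any type with decidable equality. -/
def l01 (Y : Type) [DecidableEq Y] : NearMetric Y where
  loss y₁ y₂ := if y₁ = y₂ then 0 else 1
  nonneg := by intro a b; split <;> norm_num
  symm := by intro a b; simp [eq_comm]
  eq_zero_iff := by intro a b; split <;> simp_all
  c := 1
  c_nonneg := by norm_num
  triangle := by
    intro a b c
    by_cases h1 : a = c <;> by_cases h2 : b = a <;> by_cases h3 : b = c <;>
      simp_all

/-- An online learning rule: a sequence of measurable maps
`f t : 𝒳^t × 𝒴^t × 𝒳 → 𝒴` (the history at time `t+1` has length `t`). -/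
def IsLearningRule {X Y : Type} [MeasurableSpace X] (L : NearMetric Y)
    (f : (t : ℕ) → (Fin t → X) → (Fin t → Y) → X → Y) : Prop :=
  letI : MeasurableSpace Y := L.mSpace
  ∀ t : ℕ, Measurable fun p : (Fin t → X) × (Fin t → Y) × X => f t p.1 p.2.1 p.2.2

/-- The average loss of learning rule `f` on target `fstar` under process `Xp`
up to horizon `T`, at sample `ω`. -/
noncomputable def avgLoss {X Y Ω : Type} (L : NearMetric Y) (Xp : ℕ → Ω → X)
    (f : (t : ℕ) → (Fin t → X) → (Fin t → Y) → X → Y) (fstar : X → Y)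
    (T : ℕ) (ω : Ω) : ℝ :=
  (T : ℝ)⁻¹ * ∑ t ∈ Finset.range T,
    L.loss (f t (fun i => Xp i.1 ω) (fun i => fstar (Xp i.1 ω)) (Xp t ω)) (fstar (Xp t ω))

/-- The rule `f` is (strongly) consistent for target `fstar` under the process `Xp`. -/
def Consistent {X Y Ω : Type} [MeasurableSpace Ω] (μ : Measure Ω) (L : NearMetric Y)
    (Xp : ℕ → Ω → X) (f : (t : ℕ) → (Fin t → X) → (Fin t → Y) → X → Y)
    (fstar : X → Y) : Prop :=
  ∀ᵐ ω ∂μ, Tendsto (fun T => avgLoss L Xp f fstar T ω) atTop (𝓝 0)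

/-- `Xp ∈ SUOL`: the process admits strong universal online learning for
the value space `(Y, L)`. -/
def SUOL {X Y Ω : Type} [MeasurableSpace X] [MeasurableSpace Ω] (μ : Measure Ω)
    (L : NearMetric Y) (Xp : ℕ → Ω → X) : Prop :=
  ∃ f : (t : ℕ) → (Fin t → X) → (Fin t → Y) → X → Y,
    IsLearningRule L f ∧
    ∀ fstar : X → Y, L.MeasurableFun fstar → Consistent μ L Xp f fstar

/-- For any separable near-metric value space `(Y, L)` with
`0 < ℓ̄ < ∞`, every process admitting strong universal online learning for `(Y, L)`
also admits it for binary classification. -/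
lemma l01_bool_measurableSet (s : Set Bool) :
    MeasurableSet[(l01 Bool).mSpace] s := by
  have ht : MeasurableSet[(l01 Bool).mSpace] {true} := by
    apply MeasurableSpace.measurableSet_generateFrom
    refine ⟨true, 1, ?_⟩
    ext y; cases y <;> simp [l01]
  have hf : MeasurableSet[(l01 Bool).mSpace] {false} := by
    apply MeasurableSpace.measurableSet_generateFrom
    refine ⟨false, 1, ?_⟩
    ext y; cases y <;> simp [l01]
  have hs : s = ⋃ b ∈ s, {b} := by simp
  rw [hs]
  exact MeasurableSet.biUnion s.to_countable (fun b _ => by cases b <;> assumption)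

lemma measurable_from_bool {α : Type} {m : MeasurableSpace α} (g : Bool → α) :
    @Measurable Bool α (l01 Bool).mSpace m g := fun s _ => l01_bool_measurableSet _

lemma measurable_loss {Y : Type} (L : NearMetric Y) (y₀ : Y) :
    Measurable[L.mSpace] (fun y => L.loss y₀ y) := by
  apply measurable_of_Iio
  intro x
  apply MeasurableSpace.measurableSet_generateFrom
  exact ⟨y₀, x, rfl⟩

lemma l01_key {Y : Type} (L : NearMetric Y) {yF yT : Y} (hd : 0 < L.loss yF yT)
    (y : Y) (b : Bool) :
    (l01 Bool).loss (if L.loss yT y < L.loss yF y then true else false) b ≤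
      (2 * L.c / L.loss yF yT) * L.loss y (if b then yT else yF) := by
  have hc1 : 1 ≤ L.c := by
    have h := L.triangle yF yF yT
    rw [(L.eq_zero_iff yF yF).mpr rfl] at h
    nlinarith
  have hK : 0 ≤ 2 * L.c / L.loss yF yT := by positivity
  by_cases he : (if L.loss yT y < L.loss yF y then true else false) = b
  · rw [he]
    have : (l01 Bool).loss b b = 0 := by simp [l01]
    rw [this]
    exact mul_nonneg hK (L.nonneg _ _)
  · have h1 : (l01 Bool).loss (if L.loss yT y < L.loss yF y then true else false) b = 1 := by
      show (if (if L.loss yT y < L.loss yF y then true else false) = b then (0:ℝ) else 1) = 1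
      rw [if_neg he]
    rw [h1]
    have htri := L.triangle yF y yT
    -- htri : L.loss yF yT ≤ L.c * (L.loss y yF + L.loss y yT)
    cases b with
    | true =>
      -- decode is false, so ¬ (loss yT y < loss yF y), i.e. loss yF y ≤ loss yT y
      have hle : L.loss yF y ≤ L.loss yT y := by
        by_contra hcon
        push_neg at hcon
        simp [hcon] at he
      have hsF := L.symm y yF
      have hsT := L.symm y yT
      have hdle : L.loss yF yT ≤ 2 * L.c * L.loss y yT := by nlinarith [L.nonneg y yT]
      have : (0:ℝ) < L.loss y yT := by nlinarith
      rw [div_mul_eq_mul_div, le_div_iff₀ hd]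
      simpa using hdle.trans_eq (by ring)
    | false =>
      have hlt : L.loss yT y < L.loss yF y := by
        by_contra hcon
        simp [hcon] at he
      have hsF := L.symm y yF
      have hsT := L.symm y yT
      have hdle : L.loss yF yT ≤ 2 * L.c * L.loss y yF := by nlinarith [L.nonneg y yF]
      rw [div_mul_eq_mul_div, le_div_iff₀ hd]
      simpa using hdle.trans_eq (by ring)


theorem suol_subset_suol_binary
    {𝒳 : Type} [MetricSpace 𝒳] [TopologicalSpace.SeparableSpace 𝒳]
    [MeasurableSpace 𝒳] [BorelSpace 𝒳]
    {Y : Type} (L : NearMetric Y) (hsep : L.Separable) (hbd : L.BoundedPos)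
    {Ω : Type} [MeasurableSpace Ω] (μ : Measure Ω) [IsProbabilityMeasure μ]
    (Xp : ℕ → Ω → 𝒳) (hX : ∀ t, Measurable (Xp t)) :
    SUOL μ L Xp → SUOL μ (l01 Bool) Xp := by
  rintro ⟨f, hf, hcons⟩
  obtain ⟨⟨yF, yT, hd⟩, -⟩ := hbd
  set φ : Bool → Y := fun b => if b then yT else yF with hφ
  set dec : Y → Bool := fun y => if L.loss yT y < L.loss yF y then true else false with hdec
  set K : ℝ := 2 * L.c / L.loss yF yT with hKdef
  refine ⟨fun t xs ys x => dec (f t xs (φ ∘ ys) x), ?_, ?_⟩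
  · -- measurability
    intro t
    letI : MeasurableSpace Y := L.mSpace
    letI : MeasurableSpace Bool := (l01 Bool).mSpace
    have hdecm : Measurable dec := by
      intro s _
      have hA : MeasurableSet[L.mSpace] {y | L.loss yT y < L.loss yF y} :=
        measurableSet_lt (measurable_loss L yT) (measurable_loss L yF)
      by_cases hT : true ∈ s <;> by_cases hF : false ∈ s
      · have : dec ⁻¹' s = Set.univ := by
          ext y; simp only [hdec, Set.mem_preimage, Set.mem_univ, iff_true]
          split <;> assumption
        rw [this]; exact MeasurableSet.univ
      · have : dec ⁻¹' s = {y | L.loss yT y < L.loss yF y} := by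
          ext y; simp only [hdec, Set.mem_preimage, Set.mem_setOf_eq]
          constructor
          · intro h; by_contra hcon; rw [if_neg hcon] at h; exact hF h
          · intro h; rw [if_pos h]; exact hT
        rw [this]; exact hA
      · have : dec ⁻¹' s = {y | L.loss yT y < L.loss yF y}ᶜ := by
          ext y; simp only [hdec, Set.mem_preimage, Set.mem_compl_iff, Set.mem_setOf_eq]
          constructor
          · intro h hcon; rw [if_pos hcon] at h; exact hT h
          · intro h; rw [if_neg h]; exact hF
        rw [this]; exact hA.compl
      · have : dec ⁻¹' s = ∅ := by
          ext y; simp only [hdec, Set.mem_preimage, Set.mem_empty_iff_false, iff_false]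
          intro h; split at h
          · exact hT h
          · exact hF h
        rw [this]; exact MeasurableSet.empty
    have hΦ : Measurable (fun p : (Fin t → 𝒳) × (Fin t → Bool) × 𝒳 =>
        ((p.1, φ ∘ p.2.1, p.2.2) : (Fin t → 𝒳) × (Fin t → Y) × 𝒳)) := by
      refine measurable_fst.prodMk (Measurable.prodMk ?_ (measurable_snd.comp measurable_snd))
      exact measurable_pi_lambda _ fun i =>
        (measurable_from_bool φ).comp ((measurable_pi_apply i).comp (measurable_fst.comp measurable_snd))
    exact hdecm.comp ((hf t).comp hΦ)
  · intro fstar hfm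
    have hstar : L.MeasurableFun (φ ∘ fstar) := (measurable_from_bool φ).comp hfm
    filter_upwards [hcons (φ ∘ fstar) hstar] with ω hω
    have hub : ∀ T, avgLoss (l01 Bool) Xp (fun t xs ys x => dec (f t xs (φ ∘ ys) x)) fstar T ω ≤
        K * avgLoss L Xp f (φ ∘ fstar) T ω := by
      intro T
      unfold avgLoss
      rw [mul_left_comm]
      refine mul_le_mul_of_nonneg_left ?_ (by positivity)
      rw [Finset.mul_sum]
      refine Finset.sum_le_sum fun t _ => ?_
      exact l01_key L hd _ _
    have hlb : ∀ T, 0 ≤ avgLoss (l01 Bool) Xp (fun t xs ys x => dec (f t xs (φ ∘ ys) x)) fstar T ω := by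
      intro T
      unfold avgLoss
      exact mul_nonneg (by positivity) (Finset.sum_nonneg fun t _ => (l01 Bool).nonneg _ _)
    have hK0 : Tendsto (fun T => K * avgLoss L Xp f (φ ∘ fstar) T ω) atTop (𝓝 0) := by
      simpa using hω.const_mul K
    exact squeeze_zero hlb hub hK0
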